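/- Let X be a separable real Banach space. Suppose there exist x₀*, y₀* ∈ X* with ‖x₀*‖ = ‖y₀*‖ = r > 0 and continuous functions φ, ψ : (0,∞) → (0,∞) with ψ(δ) < min{δ, φ(δ)} for all δ > 0, such that for every δ > 0: (i) there is a sequence (v_n*) in X* converging to 0 in the weak* topology with ‖v_n*‖ > δ for all n and ‖x₀* ± v_n*‖ ≤ r + ψ(δ) for all n and both signs; and (ii) for every sequence (u_n*) in X* converging to 0 in the weak* topology with ‖u_n*‖ > δ for all n, there exists m with ‖y₀* + u_m*‖ ≥ r + φ(δ). Then for every ε ∈ (0,2) there exist u*, v* ∈ X* with ‖u*‖ = ‖v*‖ such that u* ∈ s_ε B_{X*} and v* ∉ s_ε B_{X*}; in particular, s_ε B_{X*} is not a closed ball centered at the origin, for any ε ∈ (0,2). -/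

import Mathlib

open Filter Topology Metric

/-- The ε-Szlenk derivation of the closed dual unit ball of `X`. -/
def szlenkDeriv (X : Type*) [NormedAddCommGroup X] [NormedSpace ℝ X] (ε : ℝ) :
    Set (StrongDual ℝ X) :=
  {x : StrongDual ℝ X | ‖x‖ ≤ 1 ∧
    ∀ V : Set (StrongDual ℝ X),
      IsOpen ((StrongDual.toWeakDual '' V : Set (WeakDual ℝ X))) → x ∈ V →
        ε < Metric.diam (Metric.closedBall (0 : StrongDual ℝ X) 1 ∩ V)}

/-- A sequence in the dual is weak*-null if it tends to `0` in the weak* topology. -/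
def WeakStarNull {X : Type*} [NormedAddCommGroup X] [NormedSpace ℝ X]
    (u : ℕ → StrongDual ℝ X) : Prop :=
  Filter.Tendsto (fun n => StrongDual.toWeakDual (u n)) Filter.atTop
    (nhds (0 : WeakDual ℝ X))


set_option maxHeartbeats 1600000 in
theorem szlenkDeriv_not_ball_of_test (X : Type*) [NormedAddCommGroup X]
    [NormedSpace ℝ X] [CompleteSpace X] [TopologicalSpace.SeparableSpace X]
    (x₀ y₀ : StrongDual ℝ X) (r : ℝ) (hr : 0 < r)
    (hx₀ : ‖x₀‖ = r) (hy₀ : ‖y₀‖ = r)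
    (φ ψ : ℝ → ℝ)
    (hφcont : ContinuousOn φ (Set.Ioi (0 : ℝ))) (hψcont : ContinuousOn ψ (Set.Ioi (0 : ℝ)))
    (hφpos : ∀ δ > (0 : ℝ), 0 < φ δ) (hψpos : ∀ δ > (0 : ℝ), 0 < ψ δ)
    (hψlt : ∀ δ > (0 : ℝ), ψ δ < min δ (φ δ))
    (hi : ∀ δ > (0 : ℝ), ∃ v : ℕ → StrongDual ℝ X, WeakStarNull v ∧
      (∀ n, δ < ‖v n‖) ∧ (∀ n, ‖x₀ + v n‖ ≤ r + ψ δ) ∧ (∀ n, ‖x₀ - v n‖ ≤ r + ψ δ))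
    (hii : ∀ δ > (0 : ℝ), ∀ u : ℕ → StrongDual ℝ X, WeakStarNull u →
      (∀ n, δ < ‖u n‖) → ∃ m, r + φ δ ≤ ‖y₀ + u m‖) :
    ∀ ε ∈ Set.Ioo (0 : ℝ) 2,
      (∃ u v : StrongDual ℝ X, ‖u‖ = ‖v‖ ∧
        u ∈ szlenkDeriv X ε ∧ v ∉ szlenkDeriv X ε) ∧
      ∀ ρ : ℝ, szlenkDeriv X ε ≠ Metric.closedBall (0 : StrongDual ℝ X) ρ := by
  rintro ε ⟨hε0, hε2⟩
  have h2ε : 0 < 2 - ε := by linarith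
  -- Step 1: choose δ > 0 with ε * (r + ψ δ) = 2 * δ, by the intermediate value theorem.
  set a : ℝ := ε * r / 4 with ha_def
  have ha : 0 < a := by positivity
  set b : ℝ := (ε * r + (2 - ε) * a) / (2 - ε) with hb_def
  have hbkey : (2 - ε) * b = ε * r + (2 - ε) * a := by
    rw [hb_def]; field_simp
  have hab : a ≤ b := by nlinarith
  have hsub : Set.Icc a b ⊆ Set.Ioi 0 := fun t ht => lt_of_lt_of_le ha ht.1
  have hcont : ContinuousOn (fun t => ε * (r + ψ t) - 2 * t) (Set.Icc a b) :=
    (continuousOn_const.mul (continuousOn_const.add (hψcont.mono hsub))).sub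
      (continuousOn_const.mul continuousOn_id)
  have hfa : 0 < ε * (r + ψ a) - 2 * a := by
    have := hψpos a ha
    rw [ha_def]; nlinarith
  have hfb : ε * (r + ψ b) - 2 * b < 0 := by
    have hψb := (hψlt b (lt_of_lt_of_le ha hab)).trans_le (min_le_left _ _)
    nlinarith
  obtain ⟨δ, hδmem, hδeq⟩ :=
    intermediate_value_Icc' hab hcont (Set.mem_Icc.mpr ⟨le_of_lt hfb, le_of_lt hfa⟩)
  have hδpos : 0 < δ := hsub hδmem
  have hδeq' : ε * (r + ψ δ) = 2 * δ := by
    have : ε * (r + ψ δ) - 2 * δ = 0 := hδeq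
    linarith
  set c : ℝ := r + ψ δ with hc_def
  have hψδ : 0 < ψ δ := hψpos δ hδpos
  have hc : 0 < c := by rw [hc_def]; linarith
  have hc0 : c ≠ 0 := ne_of_gt hc
  have hrc : r < c := by rw [hc_def]; linarith
  have hεc : ε * c = 2 * δ := hδeq'
  -- The two witnesses.
  set u : StrongDual ℝ X := c⁻¹ • x₀ with hu_def
  set v : StrongDual ℝ X := c⁻¹ • y₀ with hv_def
  have hun : ‖u‖ = c⁻¹ * r := by
    rw [hu_def, norm_smul, Real.norm_eq_abs, abs_inv, abs_of_pos hc, hx₀]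
  have hvn : ‖v‖ = c⁻¹ * r := by
    rw [hv_def, norm_smul, Real.norm_eq_abs, abs_inv, abs_of_pos hc, hy₀]
  have hun1 : ‖u‖ ≤ 1 := by
    rw [hun]
    rw [inv_mul_le_iff₀ hc, mul_one]
    exact le_of_lt hrc
  -- Part A : u ∈ szlenkDeriv X ε
  have hA : u ∈ szlenkDeriv X ε := by
    refine ⟨hun1, fun V hV huV => ?_⟩
    obtain ⟨w, hwnull, hwn, hwp, hwm⟩ := hi δ hδpos
    have hmemV : (StrongDual.toWeakDual '' V : Set (WeakDual ℝ X)) ∈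
        𝓝 (StrongDual.toWeakDual u) :=
      hV.mem_nhds ⟨u, huV, rfl⟩
    have htp : Filter.Tendsto (fun n => StrongDual.toWeakDual (u + c⁻¹ • w n))
        Filter.atTop (𝓝 (StrongDual.toWeakDual u)) := by
      have : ∀ n, StrongDual.toWeakDual (u + c⁻¹ • w n) =
          StrongDual.toWeakDual u + c⁻¹ • StrongDual.toWeakDual (w n) := by
        intro n; simp [map_add, map_smul]
      simp only [this]
      have := (hwnull.const_smul (c⁻¹ : ℝ)).const_add (StrongDual.toWeakDual u)
      simpa using this
    have htm : Filter.Tendsto (fun n => StrongDual.toWeakDual (u - c⁻¹ • w n))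
        Filter.atTop (𝓝 (StrongDual.toWeakDual u)) := by
      have : ∀ n, StrongDual.toWeakDual (u - c⁻¹ • w n) =
          StrongDual.toWeakDual u + (-c⁻¹) • StrongDual.toWeakDual (w n) := by
        intro n; simp [map_sub, map_smul, sub_eq_add_neg, neg_smul]
      simp only [this]
      have := (hwnull.const_smul ((-c⁻¹) : ℝ)).const_add (StrongDual.toWeakDual u)
      simpa using this
    have hev := (htp.eventually_mem hmemV).and (htm.eventually_mem hmemV)
    obtain ⟨n, hn1, hn2⟩ := hev.exists
    have hmem : ∀ z : StrongDual ℝ X,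
        StrongDual.toWeakDual z ∈ (StrongDual.toWeakDual '' V) → z ∈ V := by
      rintro z ⟨z', hz', hzz⟩
      rwa [← StrongDual.toWeakDual.injective hzz]
    have hp : u + c⁻¹ • w n ∈ V := hmem _ hn1
    have hq : u - c⁻¹ • w n ∈ V := hmem _ hn2
    have hnormp : ‖u + c⁻¹ • w n‖ ≤ 1 := by
      have : u + c⁻¹ • w n = c⁻¹ • (x₀ + w n) := by
        rw [hu_def, smul_add]
      rw [this, norm_smul, Real.norm_eq_abs, abs_inv, abs_of_pos hc,
        inv_mul_le_iff₀ hc, mul_one]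
      exact hwp n
    have hnormq : ‖u - c⁻¹ • w n‖ ≤ 1 := by
      have : u - c⁻¹ • w n = c⁻¹ • (x₀ - w n) := by
        rw [hu_def, smul_sub]
      rw [this, norm_smul, Real.norm_eq_abs, abs_inv, abs_of_pos hc,
        inv_mul_le_iff₀ hc, mul_one]
      exact hwm n
    have hbd : Bornology.IsBounded
        (Metric.closedBall (0 : StrongDual ℝ X) 1 ∩ V) :=
      Metric.isBounded_closedBall.subset Set.inter_subset_left
    have hpm : u + c⁻¹ • w n ∈ Metric.closedBall (0 : StrongDual ℝ X) 1 ∩ V :=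
      ⟨by simpa [Metric.mem_closedBall, dist_zero_right] using hnormp, hp⟩
    have hqm : u - c⁻¹ • w n ∈ Metric.closedBall (0 : StrongDual ℝ X) 1 ∩ V :=
      ⟨by simpa [Metric.mem_closedBall, dist_zero_right] using hnormq, hq⟩
    have hdist : ε < dist (u + c⁻¹ • w n) (u - c⁻¹ • w n) := by
      rw [dist_eq_norm]
      have h1 : u + c⁻¹ • w n - (u - c⁻¹ • w n) = (2 * c⁻¹) • w n := by
        rw [two_mul, add_smul]; abel
      rw [h1, norm_smul, Real.norm_eq_abs]
      have h2 : |2 * c⁻¹| = 2 * c⁻¹ := abs_of_pos (by positivity)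
      rw [h2]
      have h3 : ε = 2 * c⁻¹ * δ := by
        field_simp
        linarith [hεc]
      rw [h3]
      have := hwn n
      have hpos : (0:ℝ) < 2 * c⁻¹ := by positivity
      exact (mul_lt_mul_iff_right₀ hpos).mpr this
    exact hdist.trans_le (Metric.dist_le_diam_of_mem hbd hpm hqm)
  -- Part B : v ∉ szlenkDeriv X ε
  have hB : v ∉ szlenkDeriv X ε := by
    rintro ⟨hv1, hv2⟩
    obtain ⟨d, hd⟩ := TopologicalSpace.exists_dense_seq X
    -- weak* neighborhoods of v
    set V : ℕ → Set (StrongDual ℝ X) :=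
      fun k => {z | ∀ i < k, |z (d i) - v (d i)| < 1 / (k + 1)} with hV_def
    have hVopen : ∀ k, IsOpen ((StrongDual.toWeakDual '' V k : Set (WeakDual ℝ X))) := by
      intro k
      have himg : (StrongDual.toWeakDual '' V k : Set (WeakDual ℝ X)) =
          {z : WeakDual ℝ X | ∀ i < k, |z (d i) - v (d i)| < 1 / (k + 1)} := by
        ext z
        constructor
        · rintro ⟨z', hz', rfl⟩
          exact hz'
        · intro hz
          exact ⟨StrongDual.toWeakDual.symm z, hz, by simp⟩
      rw [himg]
      have : {z : WeakDual ℝ X | ∀ i < k, |z (d i) - v (d i)| < 1 / (k + 1)} =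
          ⋂ i ∈ Finset.range k, {z : WeakDual ℝ X | |z (d i) - v (d i)| < 1 / (k + 1)} := by
        ext z; simp [Finset.mem_range]
      rw [this]
      refine isOpen_biInter_finset fun i _ => ?_
      have hcont : Continuous fun z : WeakDual ℝ X => |z (d i) - v (d i)| :=
        ((WeakDual.eval_continuous (d i)).sub continuous_const).abs
      exact isOpen_lt hcont continuous_const
    have hVmem : ∀ k, v ∈ V k := by
      intro k i _
      simp only [sub_self, abs_zero]
      positivity
    -- produce the bad sequence
    have key : ∀ k : ℕ, ∃ w : StrongDual ℝ X, ‖w‖ ≤ 1 ∧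
        (∀ i < k, |w (d i) - v (d i)| < 1 / (k + 1)) ∧ ε / 2 < ‖w - v‖ := by
      intro k
      have hdiam := hv2 (V k) (hVopen k) (hVmem k)
      by_contra hcon
      push_neg at hcon
      have hle : Metric.diam (Metric.closedBall (0 : StrongDual ℝ X) 1 ∩ V k) ≤ ε := by
        refine Metric.diam_le_of_forall_dist_le (le_of_lt hε0) ?_
        rintro p ⟨hp1, hp2⟩ q ⟨hq1, hq2⟩
        have hpv : ‖p - v‖ ≤ ε / 2 := by
          by_contra h
          push_neg at h
          exact absurd (hcon p (by simpa [Metric.mem_closedBall, dist_zero_right] using hp1)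
            hp2) (not_le.mpr h)
        have hqv : ‖q - v‖ ≤ ε / 2 := by
          by_contra h
          push_neg at h
          exact absurd (hcon q (by simpa [Metric.mem_closedBall, dist_zero_right] using hq1)
            hq2) (not_le.mpr h)
        calc dist p q = ‖p - q‖ := dist_eq_norm p q
          _ ≤ ‖p - v‖ + ‖v - q‖ := norm_sub_le_norm_sub_add_norm_sub p v q
          _ = ‖p - v‖ + ‖q - v‖ := by rw [norm_sub_rev v q]
          _ ≤ ε / 2 + ε / 2 := add_le_add hpv hqv
          _ = ε := by ring
      exact absurd hdiam (not_lt.mpr hle)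
    choose w hw1 hw2 hw3 using key
    -- weak* convergence of w to v (evaluations)
    have hconv : ∀ x : X, Filter.Tendsto (fun k => w k x) Filter.atTop (𝓝 (v x)) := by
      intro x
      rw [Metric.tendsto_atTop]
      intro η hη
      obtain ⟨i, hi'⟩ := hd.exists_dist_lt x (show (0:ℝ) < η / 4 by positivity)
      obtain ⟨N₀, hN₀⟩ := exists_nat_one_div_lt (show (0:ℝ) < η / 2 by positivity)
      refine ⟨max (i + 1) N₀, fun k hk => ?_⟩
      have hik : i < k := lt_of_lt_of_le (Nat.lt_succ_self i) (le_trans (le_max_left _ _) hk)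
      have hN₀k : (N₀ : ℕ) ≤ k := le_trans (le_max_right _ _) hk
      have hkfrac : 1 / ((k : ℝ) + 1) < η / 2 := by
        have h1 : 1 / ((k : ℝ) + 1) ≤ 1 / ((N₀ : ℝ) + 1) := by
          apply one_div_le_one_div_of_le
          · positivity
          · exact_mod_cast Nat.succ_le_succ hN₀k
        exact lt_of_le_of_lt h1 hN₀
      have hdx : ‖x - d i‖ < η / 4 := by
        rw [← dist_eq_norm]
        exact hi'
      have hvb : ‖v‖ ≤ 1 := by
        rw [hvn, inv_mul_le_iff₀ hc, mul_one]
        exact le_of_lt hrc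
      have e1 : |w k x - w k (d i)| ≤ ‖x - d i‖ := by
        have : w k x - w k (d i) = w k (x - d i) := by rw [map_sub]
        rw [this]
        calc |w k (x - d i)| = ‖w k (x - d i)‖ := (Real.norm_eq_abs _).symm
          _ ≤ ‖w k‖ * ‖x - d i‖ := (w k).le_opNorm _
          _ ≤ 1 * ‖x - d i‖ := by
              apply mul_le_mul_of_nonneg_right (hw1 k) (norm_nonneg _)
          _ = ‖x - d i‖ := one_mul _
      have e2 : |v (d i) - v x| ≤ ‖x - d i‖ := by
        have : v (d i) - v x = v (d i - x) := by rw [map_sub]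
        rw [this]
        calc |v (d i - x)| = ‖v (d i - x)‖ := (Real.norm_eq_abs _).symm
          _ ≤ ‖v‖ * ‖d i - x‖ := v.le_opNorm _
          _ ≤ 1 * ‖d i - x‖ := by
              apply mul_le_mul_of_nonneg_right hvb (norm_nonneg _)
          _ = ‖x - d i‖ := by rw [one_mul, norm_sub_rev]
      have e3 : |w k (d i) - v (d i)| < 1 / (k + 1) := hw2 k i hik
      have : |w k x - v x| < η := by
        have tri : |w k x - v x| ≤
            |w k x - w k (d i)| + |w k (d i) - v (d i)| + |v (d i) - v x| := by
          have : w k x - v x =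
              (w k x - w k (d i)) + (w k (d i) - v (d i)) + (v (d i) - v x) := by ring
          rw [this]
          exact (abs_add_le _ _).trans (add_le_add_left (abs_add_le _ _) _)
        calc |w k x - v x| ≤ _ := tri
          _ < η / 4 + η / 2 + η / 4 := by
              have a1 := e1.trans_lt hdx
              have a2 := e2.trans_lt hdx
              linarith [e3, hkfrac]
          _ = η := by ring
      rwa [Real.dist_eq]
    -- build the weak*-null sequence
    set u' : ℕ → StrongDual ℝ X := fun k => c • (w k - v) with hu'_def
    have hnull : WeakStarNull u' := by
      rw [WeakStarNull, tendsto_iff_forall_eval_tendsto_topDualPairing]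
      intro x
      have : ∀ k, (topDualPairing ℝ X) (StrongDual.toWeakDual (u' k)) x =
          c * (w k x - v x) := by
        intro k
        simp only [hu'_def]
        rfl
      simp only [this]
      have h0 : (topDualPairing ℝ X) (0 : WeakDual ℝ X) x = 0 := rfl
      rw [h0]
      have := ((hconv x).sub_const (v x)).const_mul c
      simpa using this
    have hnorms : ∀ k, δ < ‖u' k‖ := by
      intro k
      have : ‖u' k‖ = c * ‖w k - v‖ := by
        rw [hu'_def]
        simp only []
        rw [norm_smul, Real.norm_eq_abs, abs_of_pos hc]
      rw [this]
      have h1 : c * (ε / 2) < c * ‖w k - v‖ := (mul_lt_mul_iff_right₀ hc).mpr (hw3 k)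
      have h2 : c * (ε / 2) = δ := by linear_combination hεc / 2
      rw [← h2]
      exact h1
    obtain ⟨m, hm⟩ := hii δ hδpos u' hnull hnorms
    have hval : y₀ + u' m = c • w m := by
      rw [hu'_def]
      simp only []
      rw [smul_sub, hv_def, smul_inv_smul₀ hc0]
      abel
    have hbound : ‖y₀ + u' m‖ ≤ c := by
      rw [hval, norm_smul, Real.norm_eq_abs, abs_of_pos hc]
      calc c * ‖w m‖ ≤ c * 1 := by
            exact mul_le_mul_of_nonneg_left (hw1 m) (le_of_lt hc)
        _ = c := mul_one c
    have hφδ := (hψlt δ hδpos).trans_le (min_le_right _ _)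
    have : r + φ δ ≤ c := le_trans hm hbound
    rw [hc_def] at this
    linarith
  refine ⟨⟨u, v, by rw [hun, hvn], hA, hB⟩, ?_⟩
  intro ρ hρ
  have hu' : u ∈ Metric.closedBall (0 : StrongDual ℝ X) ρ := hρ ▸ hA
  have hv' : v ∉ Metric.closedBall (0 : StrongDual ℝ X) ρ := hρ ▸ hB
  rw [Metric.mem_closedBall, dist_zero_right] at hu' hv'
  exact hv' (by rw [hvn, ← hun]; exact hu')
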